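/- arXiv:1606.07518 — 7 statements merged into one kernel-verified Lean document; each statement's English description precedes it below -/
import Mathlib

section
/- Every countable union of locally closed sets in a topological space can be written as a countable union of pairwise disjoint locally closed sets. -/
open Set Function

/-- Difference of two locally closed sets is a disjoint union of two locally closed sets. -/
lemma diff_locallyClosed {X : Type*} [TopologicalSpace X] {L M : Set X}
    (hL : IsLocallyClosed L) (hM : IsLocallyClosed M) :
    ∃ P Q : Set X, IsLocallyClosed P ∧ IsLocallyClosed Q ∧ Disjoint P Q ∧ L \ M = P ∪ Q := by
  obtain ⟨U, C, hU, hC, rfl⟩ := hL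
  obtain ⟨V, D, hV, hD, rfl⟩ := hM
  refine ⟨U ∩ (C ∩ Vᶜ), (U ∩ V ∩ Dᶜ) ∩ C, ⟨U, C ∩ Vᶜ, hU, hC.inter (isClosed_compl_iff.2 hV), rfl⟩,
    ⟨U ∩ V ∩ Dᶜ, C, (hU.inter hV).inter (isOpen_compl_iff.2 hD), hC, rfl⟩, ?_, ?_⟩
  · exact Set.disjoint_left.2 fun x hx hx' => hx.2.2 hx'.1.1.2
  · ext x
    simp only [mem_diff, mem_inter_iff, mem_union, mem_compl_iff]
    tauto

/-- A pair of disjoint locally closed sets as a countable disjoint locally closed family. -/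
lemma two_family {X : Type*} [TopologicalSpace X] {P Q : Set X} (hP : IsLocallyClosed P)
    (hQ : IsLocallyClosed Q) (hPQ : Disjoint P Q) :
    ∃ B : ℕ → Set X, (∀ j, IsLocallyClosed (B j)) ∧
      Pairwise (Function.onFun Disjoint B) ∧ (⋃ j, B j) = P ∪ Q := by
  refine ⟨fun m => if m = 0 then P else if m = 1 then Q else ∅, fun m => ?_, ?_, ?_⟩
  · rcases m with _ | (_ | m) <;> simp <;> first
      | exact hP | exact hQ | exact ⟨∅, ∅, isOpen_empty, isClosed_empty, by simp⟩
  · intro m m' hmm'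
    simp only [Function.onFun]
    rcases m with _ | (_ | m) <;> rcases m' with _ | (_ | m') <;>
      simp_all [disjoint_comm, hPQ]
  · apply Set.Subset.antisymm
    · refine iUnion_subset fun m => ?_
      rcases m with _ | (_ | m) <;> simp
    · refine union_subset ?_ ?_
      · exact le_iSup_of_le 0 (by simp)
      · exact le_iSup_of_le 1 (by simp)

/-- Combining a family of families via `Nat.pair`. -/
lemma combine_families {X : Type*} (C : ℕ → ℕ → Set X)
    (hinner : ∀ i, Pairwise (Function.onFun Disjoint (C i)))
    (houter : Pairwise (Function.onFun Disjoint (fun i => ⋃ j, C i j))) :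
    Pairwise (Function.onFun Disjoint (fun n => C (Nat.unpair n).1 (Nat.unpair n).2)) ∧
      (⋃ n, C (Nat.unpair n).1 (Nat.unpair n).2) = ⋃ i, ⋃ j, C i j := by
  constructor
  · intro n m hnm
    rcases eq_or_ne (Nat.unpair n).1 (Nat.unpair m).1 with h1 | h1
    · have h2 : (Nat.unpair n).2 ≠ (Nat.unpair m).2 := by
        intro h2
        apply hnm
        rw [← Nat.pair_unpair n, ← Nat.pair_unpair m, h1, h2]
      have := hinner (Nat.unpair n).1 h2
      simpa [Function.onFun, h1] using this
    · have := houter h1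
      exact this.mono (subset_iUnion _ _) (subset_iUnion _ _)
  · apply Set.Subset.antisymm
    · exact iUnion_subset fun n => subset_iUnion_of_subset (Nat.unpair n).1
        (subset_iUnion _ (Nat.unpair n).2)
    · refine iUnion_subset fun i => iUnion_subset fun j => ?_
      have : C i j = C (Nat.unpair (Nat.pair i j)).1 (Nat.unpair (Nat.pair i j)).2 := by
        rw [Nat.unpair_pair]
      rw [this]
      exact subset_iUnion (fun n => C (Nat.unpair n).1 (Nat.unpair n).2) (Nat.pair i j)

/-- Subtracting a locally closed set from a disjoint locally closed family. -/
lemma family_diff {X : Type*} [TopologicalSpace X] {B : ℕ → Set X}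
    (hlc : ∀ j, IsLocallyClosed (B j)) (hdisj : Pairwise (Function.onFun Disjoint B))
    {M : Set X} (hM : IsLocallyClosed M) :
    ∃ B' : ℕ → Set X, (∀ j, IsLocallyClosed (B' j)) ∧
      Pairwise (Function.onFun Disjoint B') ∧ (⋃ j, B' j) = (⋃ j, B j) \ M := by
  have h : ∀ j, ∃ C : ℕ → Set X, (∀ m, IsLocallyClosed (C m)) ∧
      Pairwise (Function.onFun Disjoint C) ∧ (⋃ m, C m) = B j \ M := by
    intro j
    obtain ⟨P, Q, hP, hQ, hPQ, hsplit⟩ := diff_locallyClosed (hlc j) hM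
    obtain ⟨C, h1, h2, h3⟩ := two_family hP hQ hPQ
    exact ⟨C, h1, h2, by rw [h3, hsplit]⟩
  choose C hClc hCdisj hCeq using h
  have houter : Pairwise (Function.onFun Disjoint (fun j => ⋃ m, C j m)) := by
    intro j j' hjj'
    simp only [Function.onFun, hCeq]
    exact (hdisj hjj').mono diff_subset diff_subset
  obtain ⟨hd, hu⟩ := combine_families C hCdisj houter
  refine ⟨fun n => C (Nat.unpair n).1 (Nat.unpair n).2, fun n => hClc _ _, hd, ?_⟩
  rw [hu]
  simp only [hCeq]
  exact (iUnion_diff _ _).symm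

/-- A locally closed set minus a partial sup of locally closed sets is a countable
disjoint union of locally closed sets. -/
lemma diff_partialSups {X : Type*} [TopologicalSpace X] {L : Set X} (hL : IsLocallyClosed L)
    (f : ℕ → Set X) (hf : ∀ i, IsLocallyClosed (f i)) (n : ℕ) :
    ∃ B : ℕ → Set X, (∀ j, IsLocallyClosed (B j)) ∧
      Pairwise (Function.onFun Disjoint B) ∧ (⋃ j, B j) = L \ partialSups f n := by
  induction n with
  | zero =>
    obtain ⟨P, Q, hP, hQ, hPQ, hsplit⟩ := diff_locallyClosed hL (hf 0)
    obtain ⟨B, h1, h2, h3⟩ := two_family hP hQ hPQ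
    exact ⟨B, h1, h2, by rw [h3, ← hsplit, partialSups_zero]⟩
  | succ n ih =>
    obtain ⟨B, hBlc, hBdisj, hBeq⟩ := ih
    obtain ⟨B', hB'lc, hB'disj, hB'eq⟩ := family_diff hBlc hBdisj (hf (n + 1))
    refine ⟨B', hB'lc, hB'disj, ?_⟩
    rw [hB'eq, hBeq, partialSups_add_one, Set.diff_diff]
    rfl

theorem stmt_3 {X : Type*} [TopologicalSpace X] (A : Set X) (f : ℕ → Set X)
    (hf : ∀ i, IsLocallyClosed (f i)) (hA : A = ⋃ i, f i) :
    ∃ B : ℕ → Set X, (∀ j, IsLocallyClosed (B j)) ∧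
      Pairwise (Function.onFun Disjoint B) ∧ A = ⋃ j, B j := by
  have key : ∀ i : ℕ, ∃ B : ℕ → Set X, (∀ j, IsLocallyClosed (B j)) ∧
      Pairwise (Function.onFun Disjoint B) ∧ (⋃ j, B j) = disjointed f i := by
    intro i
    rcases i with _ | n
    · obtain ⟨B, h1, h2, h3⟩ := two_family (hf 0)
        (⟨∅, ∅, isOpen_empty, isClosed_empty, by simp⟩ : IsLocallyClosed (∅ : Set X))
        (disjoint_empty (f 0))
      exact ⟨B, h1, h2, by rw [h3, union_empty, disjointed_zero]⟩
    · obtain ⟨B, h1, h2, h3⟩ := diff_partialSups (hf (n + 1)) f hf n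
      exact ⟨B, h1, h2, by rw [h3, disjointed_add_one]⟩
  choose C hClc hCdisj hCeq using key
  have houter : Pairwise (Function.onFun Disjoint (fun i => ⋃ j, C i j)) := by
    intro i i' hii'
    simp only [Function.onFun, hCeq]
    exact disjoint_disjointed f hii'
  obtain ⟨hd, hu⟩ := combine_families C hCdisj houter
  refine ⟨fun n => C (Nat.unpair n).1 (Nat.unpair n).2, fun n => hClc _ _, hd, ?_⟩
  rw [hu, hA]
  simp only [hCeq]
  exact (iSup_disjointed f).symm
end

section
/- Let ⟨A_i⟩_{i<λ} (λ ≤ ω) be a pseudo-stratification of a topological space X. Then there exists a sequence of open sets ⟨U_i⟩_{i<λ} such that (1) U_i ∩ closure(A_i) = A_i for all i, and (2) for all j < i, if U_i ∩ A_j ≠ ∅ then A_i ⊆ closure(A_j). -/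
theorem stmt_6 {X : Type*} [TopologicalSpace X] (A : ℕ → Set X)
    (hlc : ∀ i, IsLocallyClosed (A i))
    (hdisj : Pairwise (Function.onFun Disjoint A))
    (hcover : (⋃ i, A i) = Set.univ)
    (hstrat : ∀ j i : ℕ, j < i → A i ∩ closure (A j) = ∅ ∨ A i ⊆ closure (A j)) :
    ∃ U : ℕ → Set X, (∀ i, IsOpen (U i)) ∧ (∀ i, U i ∩ closure (A i) = A i) ∧
      ∀ j i : ℕ, j < i → (U i ∩ A j).Nonempty → A i ⊆ closure (A j) := by
  classical
  choose V Z hVopen hZclosed hVZ using hlc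
  -- A i = V i ∩ closure (A i)
  have hVA : ∀ i, V i ∩ closure (A i) = A i := by
    intro i
    apply subset_antisymm
    · intro x ⟨hxV, hxC⟩
      have : closure (A i) ⊆ Z i := by
        rw [hVZ i]
        exact closure_minimal Set.inter_subset_right (hZclosed i)
      rw [hVZ i]; exact ⟨hxV, this hxC⟩
    · intro x hx
      have hx' := hx; rw [hVZ i] at hx'
      exact ⟨hx'.1, subset_closure hx⟩
  refine ⟨fun i => V i \ ⋃ j ∈ Finset.range i,
      if A i ∩ closure (A j) = ∅ then closure (A j) else ∅, ?_, ?_, ?_⟩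
  · intro i
    apply (hVopen i).sdiff
    apply Set.Finite.isClosed_biUnion (Finset.finite_toSet _)
    intro j _
    split <;> simp [isClosed_closure]
  · intro i
    apply subset_antisymm
    · intro x ⟨hx, hxC⟩
      rw [← hVA i]; exact ⟨hx.1, hxC⟩
    · intro x hx
      refine ⟨⟨((Set.ext_iff.mp (hVA i) x).mpr hx).1, ?_⟩, subset_closure hx⟩
      simp only [Set.mem_iUnion, not_exists]
      intro j hj hmem
      by_cases h : A i ∩ closure (A j) = ∅
      · rw [if_pos h] at hmem
        exact absurd (Set.mem_inter hx hmem) (by rw [h]; exact id)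
      · rw [if_neg h] at hmem
        exact hmem
  · intro j i hji ⟨x, hxU, hxA⟩
    rcases hstrat j i hji with h | h
    · exfalso
      apply hxU.2
      refine Set.mem_biUnion (Finset.mem_range.mpr hji) ?_
      rw [if_pos h]
      exact subset_closure hxA
    · exact h
end

section
/- Every pseudo-stratification is linearly separated: if ⟨A_i⟩_{i<λ} (λ ≤ ω) is a pseudo-stratification of a topological space X, then there is a total (linear) order ⊴ on the index set such that for each i there is an open set U_i ⊇ A_i with U_i ∩ A_j = ∅ whenever j ⊴ i and j ≠ i. -/
theorem stmt_7 {X : Type*} [TopologicalSpace X] (A : ℕ → Set X)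
    (hlc : ∀ i, IsLocallyClosed (A i))
    (hdisj : Pairwise (Function.onFun Disjoint A))
    (hcover : (⋃ i, A i) = Set.univ)
    (hstrat : ∀ j i : ℕ, j < i → A i ∩ closure (A j) = ∅ ∨ A i ⊆ closure (A j)) :
    ∃ le : ℕ → ℕ → Prop, IsLinearOrder ℕ le ∧
      ∀ i : ℕ, ∃ U : Set X, IsOpen U ∧ A i ⊆ U ∧
        ∀ j : ℕ, le j i → j ≠ i → U ∩ A j = ∅ := by
  classical
  -- For each i, an open V i with A i = V i ∩ closure (A i)
  have hVex : ∀ i, ∃ V : Set X, IsOpen V ∧ A i = V ∩ closure (A i) := by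
    intro i
    obtain ⟨U, Z, hU, hZ, hA⟩ := hlc i
    refine ⟨U, hU, subset_antisymm
      (Set.subset_inter (by rw [hA]; exact Set.inter_subset_left) subset_closure) ?_⟩
    intro x hx
    rw [hA]
    exact ⟨hx.1, closure_minimal (by rw [hA]; exact Set.inter_subset_right) hZ hx.2⟩
  choose V hVopen hVeq using hVex
  -- Key lemma: if A i ⊆ closure (A j) (i ≠ j) then A j misses closure (A i)
  have hL : ∀ i j : ℕ, i ≠ j → A i ⊆ closure (A j) → ∀ x ∈ A j, x ∉ closure (A i) := by
    intro i j hne hsub x hxj hxi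
    have hxV : x ∈ V j := by rw [hVeq j] at hxj; exact hxj.1
    obtain ⟨y, hyV, hyA⟩ := mem_closure_iff.mp hxi (V j) (hVopen j) hxV
    have hyj : y ∈ A j := by rw [hVeq j]; exact ⟨hyV, hsub hyA⟩
    exact Set.disjoint_left.mp (hdisj hne) hyA hyj
  -- ancestor profile
  set χ : ℕ → ℕ → Bool := fun i m => if A i ⊆ closure (A m) then false else true with hχ
  have hχ_self : ∀ i, χ i i = false := by
    intro i; simp only [hχ]; rw [if_pos subset_closure]
  have hχ_false : ∀ i m, χ i m = false ↔ A i ⊆ closure (A m) := by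
    intro i m
    simp only [hχ]
    by_cases h : A i ⊆ closure (A m) <;> simp [h]
  set f : ℕ → (Lex (ℕ → Bool)) ×ₗ ℕ := fun i => toLex (toLex (χ i), i) with hf
  have hfinj : Function.Injective f := by
    intro a b hab
    have : (ofLex (f a)).2 = (ofLex (f b)).2 := by rw [hab]
    simpa [hf] using this
  refine ⟨fun i j => f i ≤ f j,
    { refl := fun a => le_refl (f a)
      trans := fun a b c hab hbc => le_trans hab hbc
      antisymm := fun a b h1 h2 => hfinj (le_antisymm h1 h2)
      total := fun a b => le_total (f a) (f b) }, ?_⟩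
  intro i
  -- the bad closed set
  set F : Finset ℕ := (Finset.range i).filter (fun d => ¬ A i ⊆ closure (A d)) with hF
  set Z : Set X := (closure (A i) \ V i) ∪ ⋃ d ∈ (F : Set ℕ), closure (A d) with hZ
  have hZclosed : IsClosed Z := by
    refine IsClosed.union (isClosed_closure.sdiff (hVopen i)) ?_
    exact F.finite_toSet.isClosed_biUnion (fun d _ => isClosed_closure)
  have hAiZ : ∀ x ∈ A i, x ∉ Z := by
    intro x hx hxZ
    rcases hxZ with hxZ | hxZ
    · exact hxZ.2 (by rw [hVeq i] at hx; exact hx.1)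
    · obtain ⟨d, hdF, hxd⟩ := Set.mem_iUnion₂.mp hxZ
      have hdF' := Finset.mem_filter.mp hdF
      have hdi : d < i := Finset.mem_range.mp hdF'.1
      rcases hstrat d i hdi with hcase | hcase
      · exact Set.eq_empty_iff_forall_notMem.mp hcase x ⟨hx, hxd⟩
      · exact hdF'.2 hcase
  refine ⟨Zᶜ, hZclosed.isOpen_compl, fun x hx => hAiZ x hx, ?_⟩
  intro j hle hne
  -- show A j ⊆ Z
  have hAjZ : A j ⊆ Z := by
    have hlt : f j < f i := lt_of_le_of_ne hle (fun h => hne (hfinj h))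
    rw [hf] at hlt
    rcases Prod.Lex.lt_iff.mp hlt with hlt | ⟨heq, _⟩
    · -- lexicographic difference at some coordinate d
      have hlex : Pi.Lex (· < ·) (fun {_} => (· < ·)) (χ j) (χ i) := hlt
      obtain ⟨d, hagree, hd⟩ := hlex
      have hjd : χ j d = false ∧ χ i d = true := Bool.lt_iff.mp hd
      have hjsub : A j ⊆ closure (A d) := (hχ_false j d).mp hjd.1
      rcases lt_trichotomy d i with hdi | hdi | hdi
      · -- d < i : closure (A d) ⊆ Z
        have hdF : d ∈ F := by
          refine Finset.mem_filter.mpr ⟨Finset.mem_range.mpr hdi, ?_⟩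
          intro hcon
          rw [← hχ_false i d] at hcon
          rw [hcon] at hjd
          exact Bool.false_ne_true hjd.2
        intro x hxj
        exact Or.inr (Set.mem_iUnion₂.mpr ⟨d, hdF, hjsub hxj⟩)
      · -- d = i impossible since χ i i = false
        exfalso
        rw [hdi] at hjd
        rw [hχ_self i] at hjd
        exact Bool.false_ne_true hjd.2
      · -- d > i : then χ j i = χ i i = false, so A j ⊆ closure (A i), A j ⊆ Z's first part
        have hji : χ j i = false := by rw [hagree i hdi]; exact hχ_self i
        have hjsubi : A j ⊆ closure (A i) := (hχ_false j i).mp hji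
        intro x hxj
        refine Or.inl ⟨hjsubi hxj, ?_⟩
        intro hxV
        have hxAi : x ∈ A i := by rw [hVeq i]; exact ⟨hxV, hjsubi hxj⟩
        exact Set.disjoint_left.mp (hdisj hne) hxj hxAi
    · -- profiles equal ⟹ A j = ∅
      have hχeq : χ j = χ i := by
        have := congrArg ofLex heq
        simpa using this
      have h1 : A i ⊆ closure (A j) := by
        rw [← hχ_false i j, ← congrFun hχeq j, hχ_self j]
      have h2 : A j ⊆ closure (A i) := by
        rw [← hχ_false j i, congrFun hχeq i, hχ_self i]
      intro x hxj
      exact absurd (h2 hxj) (hL i j (Ne.symm hne) h1 x hxj)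
  rw [Set.eq_empty_iff_forall_notMem]
  rintro x ⟨hxU, hxA⟩
  exact hxU (hAjZ hxA)
end

section
/- Let X be a topological space and let R be the relation on the index set of a pseudo-stratification defined by i R j iff U_i ∩ A_j ≠ ∅, where U_i are open sets satisfying U_i ∩ closure(A_i) = A_i and (j < i and U_i ∩ A_j ≠ ∅ implies A_i ⊆ closure(A_j)). Then R has no nontrivial cycles, i.e., its transitive closure is antisymmetric on distinct elements. -/
theorem stmt_8 {X : Type*} [TopologicalSpace X] (A : ℕ → Set X) (U : ℕ → Set X)
    (hlc : ∀ i, IsLocallyClosed (A i))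
    (hdisj : Pairwise (Function.onFun Disjoint A))
    (hcover : (⋃ i, A i) = Set.univ)
    (hstrat : ∀ j i : ℕ, j < i → A i ∩ closure (A j) = ∅ ∨ A i ⊆ closure (A j))
    (hUopen : ∀ i, IsOpen (U i))
    (hU1 : ∀ i, U i ∩ closure (A i) = A i)
    (hU2 : ∀ j i : ℕ, j < i → (U i ∩ A j).Nonempty → A i ⊆ closure (A j))
    (R : ℕ → ℕ → Prop) (hR : ∀ i j, R i j ↔ (U i ∩ A j).Nonempty) :
    ∀ i j : ℕ, Relation.TransGen R i j → Relation.TransGen R j i → i = j := by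
  intro i j hij hji
  by_contra hne
  -- the set of vertices lying on a nontrivial cycle
  have hS : ∃ m : ℕ, ∃ k, k ≠ m ∧ Relation.TransGen R m k ∧ Relation.TransGen R k m :=
    ⟨i, j, fun h => hne h.symm, hij, hji⟩
  classical
  set m := Nat.find hS with hmdef
  obtain ⟨k, hkne, hmk, hkm⟩ := Nat.find_spec hS
  have hmin : ∀ u < m, ¬ ∃ k, k ≠ u ∧ Relation.TransGen R u k ∧ Relation.TransGen R k u :=
    fun u hu => Nat.find_min hS hu
  -- any vertex on the cycle other than m is > m
  have hge : ∀ u, Relation.ReflTransGen R m u → Relation.ReflTransGen R u m → u ≠ m → m < u := by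
    intro u hmu hum hune
    have h1 : Relation.TransGen R m u := by
      rcases (Relation.reflTransGen_iff_eq_or_transGen.mp hmu) with h | h
      · exact absurd h hune
      · exact h
    have h2 : Relation.TransGen R u m := by
      rcases (Relation.reflTransGen_iff_eq_or_transGen.mp hum) with h | h
      · exact absurd h.symm hune
      · exact h
    by_contra hlt
    push_neg at hlt
    rcases lt_or_eq_of_le hlt with h | h
    · exact hmin u h ⟨m, fun hh => hune hh.symm, h2, h1⟩
    · exact hune h
  -- the invariant
  set J : ℕ → Prop := fun v => m < v ∧ (A v).Nonempty ∧ A v ∩ closure (A m) = ∅ with hJdef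
  -- an edge from a J-vertex back to m is impossible
  have hloop : ∀ v, J v → R v m → False := by
    intro v hJv hvm
    have hsub : A v ⊆ closure (A m) := hU2 m v hJv.1 ((hR v m).mp hvm)
    obtain ⟨x, hx⟩ := hJv.2.1
    have : x ∈ A v ∩ closure (A m) := ⟨hx, hsub hx⟩
    rw [hJv.2.2] at this
    exact this
  -- invariant propagation along an edge from a J-vertex
  have hprop : ∀ b c, J b → R b c → m < c → A c ∩ closure (A m) = ∅ := by
    intro b c hJb hbc hmc
    rcases hstrat m c hmc with h | h
    · exact h
    · exfalso
      obtain ⟨x, hxU, hxA⟩ := (hR b c).mp hbc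
      have hxcl : x ∈ closure (A m) := h hxA
      have hne' : (U b ∩ A m).Nonempty := by
        rw [mem_closure_iff] at hxcl
        exact hxcl (U b) (hUopen b) hxU
      have hsub : A b ⊆ closure (A m) := hU2 m b hJb.1 hne'
      obtain ⟨y, hy⟩ := hJb.2.1
      have : y ∈ A b ∩ closure (A m) := ⟨hy, hsub hy⟩
      rw [hJb.2.2] at this
      exact this
  -- base case: a single edge out of m
  have hbase : ∀ v, R m v → Relation.ReflTransGen R v m → v = m ∨ J v := by
    intro v hmv hvm
    by_cases h : v = m
    · exact Or.inl h
    · right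
      have hlt : m < v := hge v (Relation.ReflTransGen.single hmv) hvm h
      obtain ⟨x, hxU, hxA⟩ := (hR m v).mp hmv
      refine ⟨hlt, ⟨x, hxA⟩, ?_⟩
      rcases hstrat m v hlt with h' | h' 
      · exact h'
      · exfalso
        have hxm : x ∈ A m := by
          rw [← hU1 m]; exact ⟨hxU, h' hxA⟩
        exact (hdisj h : Disjoint (A v) (A m)).le_bot ⟨hxA, hxm⟩
  -- forward propagation: every vertex reachable from m on the cycle is m or satisfies J
  have Pfor : ∀ v, Relation.TransGen R m v → Relation.ReflTransGen R v m → v = m ∨ J v := by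
    intro v hv
    induction hv with
    | single h => exact fun hvm => hbase _ h hvm
    | @tail b c hmb hbc ih =>
      intro hcm
      have hbm : Relation.ReflTransGen R b m := Relation.ReflTransGen.head hbc hcm
      rcases ih hbm with h | hJb
      · subst h
        exact hbase c hbc hcm
      · by_cases hc : c = m
        · exact (hloop b hJb (hc ▸ hbc)).elim
        · right
          have hlt : m < c := hge c (hmb.to_reflTransGen.tail hbc) hcm hc
          obtain ⟨x, hxU, hxA⟩ := (hR b c).mp hbc
          exact ⟨hlt, ⟨x, hxA⟩, hprop b c hJb hbc hlt⟩
  -- backward: from a J-vertex one can never reach m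
  have Pback : ∀ v, Relation.TransGen R v m → Relation.ReflTransGen R m v → J v → False := by
    intro v hv
    induction hv using Relation.TransGen.head_induction_on with
    | single h => exact fun _ hJ => hloop _ hJ h
    | @head a c hac hcm ih =>
      intro hma hJa
      by_cases hc : c = m
      · exact hloop a hJa (hc ▸ hac)
      · have hmc : Relation.ReflTransGen R m c := hma.tail hac
        have hlt : m < c := hge c hmc hcm.to_reflTransGen hc
        obtain ⟨x, hxU, hxA⟩ := (hR a c).mp hac
        exact ih hmc ⟨hlt, ⟨x, hxA⟩, hprop a c hJa hac hlt⟩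
  -- conclude
  have hJk : J k := by
    rcases Pfor k hmk hkm.to_reflTransGen with h | h
    · exact absurd h hkne
    · exact h
  exact Pback k hkm hmk.to_reflTransGen hJk
end

section
/- Every countable partition of a topological space into locally closed sets can be refined to a pseudo-stratification: there exists a countable partition Π' of X into locally closed sets, each cell of which is contained in some cell of the original partition, together with an enumeration ⟨B_i⟩_{i<λ} (λ ≤ ω) of Π' such that for j < i, either B_i ∩ closure(B_j) = ∅ or B_i ⊆ closure(B_j). -/
open Set Topology
open scoped Classical

namespace Stmt9

variable {X : Type*} [TopologicalSpace X]

lemma isClosed_closure_diff {s : Set X} (hs : IsLocallyClosed s) :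
    IsClosed (closure s \ s) := by
  rw [← isOpen_compl_iff]
  have h := hs.isOpen_coborder
  rwa [coborder] at h

lemma isLocallyClosed_biInter (s : Finset ℕ) (f : ℕ → Set X)
    (hf : ∀ j ∈ s, IsLocallyClosed (f j)) :
    IsLocallyClosed (⋂ j ∈ s, f j) := by
  classical
  induction s using Finset.induction_on with
  | empty => simpa using isOpen_univ.isLocallyClosed
  | @insert a s ha ih =>
      rw [Finset.set_biInter_insert]
      exact (hf a (Finset.mem_insert_self a s)).inter
        (ih fun j hj => hf j (Finset.mem_insert_of_mem hj))

/-- The set of points not yet covered before stage `n`. -/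
def aliveSet (P : ℕ → Set X) (n : ℕ) : Set X := {y | ∀ j < n, y ∉ P j}

/-- The "trace pattern" of a point: which closures of earlier pieces contain it. -/
noncomputable def Tfun (P : ℕ → Set X) (n : ℕ) (y : X) : Finset ℕ :=
  (Finset.range n).filter fun j => y ∈ closure (P j)

lemma mem_Tfun {P : ℕ → Set X} {n j : ℕ} {y : X} :
    j ∈ Tfun P n y ↔ j < n ∧ y ∈ closure (P j) := by
  simp [Tfun]

lemma Tfun_subset_range (P : ℕ → Set X) (n : ℕ) (y : X) :
    Tfun P n y ⊆ Finset.range n :=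
  Finset.filter_subset _ _

/-- Pick a `⊆`-maximal element of a (finite nonempty) set of finsets. -/
noncomputable def pickMax (s : Set (Finset ℕ)) : Finset ℕ :=
  if h : s.Finite ∧ s.Nonempty then
    (Set.Finite.exists_maximalFor id s h.1 h.2).choose
  else ∅

lemma pickMax_spec {s : Set (Finset ℕ)} (hfin : s.Finite) (hne : s.Nonempty) :
    pickMax s ∈ s ∧ ∀ T' ∈ s, pickMax s ⊆ T' → pickMax s = T' := by
  unfold pickMax
  rw [dif_pos ⟨hfin, hne⟩]
  obtain ⟨h1, h2⟩ := (Set.Finite.exists_maximalFor id s hfin hne).choose_spec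
  exact ⟨h1, fun T' hT' hsub => Finset.Subset.antisymm hsub (h2 hT' hsub)⟩

/-- One step of the construction, abstracted over the alive set and the pattern function. -/
noncomputable def stepCore (A : ℕ → Set X) (al : Set X) (Tf : X → Finset ℕ) : Set X :=
  if h : ∃ k, (A k ∩ al).Nonempty then
    {y | y ∈ A (Nat.find h) ∩ al ∧ Tf y = pickMax (Tf '' (A (Nat.find h) ∩ al))}
  else ∅

lemma stepCore_spec (A : ℕ → Set X) (al : Set X) (Tf : X → Finset ℕ)
    (hfin : ∀ k, (Tf '' (A k ∩ al)).Finite) :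
    (stepCore A al Tf = ∅ ∧ ∀ k, A k ∩ al = ∅) ∨
    (∃ k T, (∀ k' < k, A k' ∩ al = ∅) ∧ (A k ∩ al).Nonempty ∧
      T ∈ Tf '' (A k ∩ al) ∧ (∀ T' ∈ Tf '' (A k ∩ al), T ⊆ T' → T = T') ∧
      stepCore A al Tf = {y | y ∈ A k ∩ al ∧ Tf y = T}) := by
  unfold stepCore
  split_ifs with h
  · right
    have hk : (A (Nat.find h) ∩ al).Nonempty := Nat.find_spec h
    have himg : (Tf '' (A (Nat.find h) ∩ al)).Nonempty := hk.image _
    obtain ⟨hmem, hmax⟩ := pickMax_spec (hfin (Nat.find h)) himg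
    refine ⟨Nat.find h, _, ?_, hk, hmem, hmax, rfl⟩
    intro k' hk'
    have := Nat.find_min h hk'
    rwa [Set.not_nonempty_iff_eq_empty] at this
  · left
    refine ⟨rfl, fun k => ?_⟩
    rw [← Set.not_nonempty_iff_eq_empty]
    exact fun hk => h ⟨k, hk⟩

/-- Finite-prefix approximations of the construction. -/
noncomputable def g (A : ℕ → Set X) : ℕ → ℕ → Set X
  | 0 => fun _ => ∅
  | n + 1 => Function.update (g A n) n
      (stepCore A (aliveSet (g A n) n) (Tfun (g A n) n))

/-- The sequence of pieces of the refined partition. -/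
noncomputable def BB (A : ℕ → Set X) (n : ℕ) : Set X := g A (n + 1) n

lemma g_eq_BB (A : ℕ → Set X) : ∀ m n, n < m → g A m n = BB A n := by
  intro m
  induction m with
  | zero => intro n h; omega
  | succ m ih =>
      intro n h
      rcases Nat.lt_succ_iff_lt_or_eq.mp h with h' | rfl
      · have hne : n ≠ m := by omega
        calc g A (m + 1) n = g A m n := Function.update_of_ne hne _ _
        _ = BB A n := ih n h'
      · rfl

lemma aliveSet_congr {P Q : ℕ → Set X} {n : ℕ} (h : ∀ j < n, P j = Q j) :
    aliveSet P n = aliveSet Q n := by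
  ext y
  constructor
  · intro hy j hj; rw [← h j hj]; exact hy j hj
  · intro hy j hj; rw [h j hj]; exact hy j hj

lemma Tfun_congr {P Q : ℕ → Set X} {n : ℕ} (h : ∀ j < n, P j = Q j) :
    Tfun P n = Tfun Q n := by
  funext y
  unfold Tfun
  refine Finset.filter_congr ?_
  intro j hj
  rw [h j (Finset.mem_range.mp hj)]

lemma BB_eq (A : ℕ → Set X) (n : ℕ) :
    BB A n = stepCore A (aliveSet (BB A) n) (Tfun (BB A) n) := by
  have h1 : ∀ j < n, g A n j = BB A j := fun j hj => g_eq_BB A n j hj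
  have h2 : aliveSet (g A n) n = aliveSet (BB A) n := aliveSet_congr h1
  have h3 : Tfun (g A n) n = Tfun (BB A) n := Tfun_congr h1
  show g A (n + 1) n = _
  show Function.update (g A n) n
      (stepCore A (aliveSet (g A n) n) (Tfun (g A n) n)) n = _
  rw [Function.update_self, h2, h3]

lemma image_Tfun_finite (A : ℕ → Set X) (n k : ℕ) :
    ((Tfun (BB A) n) '' (A k ∩ aliveSet (BB A) n)).Finite := by
  apply Set.Finite.subset ((Finset.range n).powerset.finite_toSet)
  rintro T ⟨y, _, rfl⟩
  simp only [Finset.coe_powerset, Set.mem_preimage, Set.mem_powerset_iff, Finset.coe_subset]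
  exact Tfun_subset_range (BB A) n y

lemma BB_spec (A : ℕ → Set X) (n : ℕ) :
    (BB A n = ∅ ∧ ∀ k, A k ∩ aliveSet (BB A) n = ∅) ∨
    (∃ k T, (∀ k' < k, A k' ∩ aliveSet (BB A) n = ∅) ∧
      (A k ∩ aliveSet (BB A) n).Nonempty ∧
      T ∈ Tfun (BB A) n '' (A k ∩ aliveSet (BB A) n) ∧
      (∀ T' ∈ Tfun (BB A) n '' (A k ∩ aliveSet (BB A) n), T ⊆ T' → T = T') ∧
      BB A n = {y | y ∈ A k ∩ aliveSet (BB A) n ∧ Tfun (BB A) n y = T}) := by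
  have := stepCore_spec A (aliveSet (BB A) n) (Tfun (BB A) n) (image_Tfun_finite A n)
  rwa [← BB_eq] at this

lemma BB_subset_alive (A : ℕ → Set X) (n : ℕ) : BB A n ⊆ aliveSet (BB A) n := by
  rcases BB_spec A n with ⟨h, _⟩ | ⟨k, T, _, _, _, _, h⟩ <;> rw [h]
  · exact empty_subset _
  · exact fun y hy => hy.1.2

lemma alive_antitone (A : ℕ → Set X) {m n : ℕ} (h : m ≤ n) :
    aliveSet (BB A) n ⊆ aliveSet (BB A) m :=
  fun y hy j hj => hy j (lt_of_lt_of_le hj h)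

lemma BB_disjoint (A : ℕ → Set X) : Pairwise (Function.onFun Disjoint (BB A)) := by
  have key : ∀ j i : ℕ, j < i → Disjoint (BB A i) (BB A j) := by
    intro j i hji
    rw [Set.disjoint_left]
    intro y hyi hyj
    exact BB_subset_alive A i hyi j hji hyj
  intro i j hne
  rcases lt_or_gt_of_ne hne with h | h
  · exact (key i j h).symm
  · exact key j i h

lemma BB_frontier (A : ℕ → Set X) :
    ∀ j i : ℕ, j < i → BB A i ∩ closure (BB A j) = ∅ ∨ BB A i ⊆ closure (BB A j) := by
  intro j i hji
  rcases BB_spec A i with ⟨h, _⟩ | ⟨k, T, _, _, _, _, h⟩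
  · left; rw [h]; exact empty_inter _
  · by_cases hjT : j ∈ T
    · right
      intro y hy
      rw [h] at hy
      have hj : j ∈ Tfun (BB A) i y := by rw [hy.2]; exact hjT
      exact (mem_Tfun.mp hj).2
    · left
      rw [Set.eq_empty_iff_forall_notMem]
      rintro y ⟨hyi, hycl⟩
      rw [h] at hyi
      apply hjT
      rw [← hyi.2]
      exact mem_Tfun.mpr ⟨hji, hycl⟩

lemma BB_lc (A : ℕ → Set X) (hlc : ∀ i, IsLocallyClosed (A i)) :
    ∀ n, IsLocallyClosed (BB A n) := by
  intro n
  induction n using Nat.strong_induction_on with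
  | _ n ih =>
    rcases BB_spec A n with ⟨h, _⟩ | ⟨k, T, _, _, hTmem, _, h⟩
    · rw [h]; exact isOpen_empty.isLocallyClosed
    · have hTsub : T ⊆ Finset.range n := by
        obtain ⟨y, _, rfl⟩ := hTmem; exact Tfun_subset_range _ _ _
      have heq : BB A n = A k ∩ ⋂ j ∈ Finset.range n,
          (if j ∈ T then closure (BB A j) \ BB A j else (closure (BB A j))ᶜ) := by
        rw [h]; ext y
        simp only [mem_setOf_eq, mem_inter_iff, mem_iInter]
        constructor
        · rintro ⟨⟨hyA, hyal⟩, hyT⟩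
          refine ⟨hyA, fun j hj => ?_⟩
          have hjn : j < n := Finset.mem_range.mp hj
          by_cases hjT : j ∈ T
          · rw [if_pos hjT]
            have hjy : j ∈ Tfun (BB A) n y := by rw [hyT]; exact hjT
            exact ⟨(mem_Tfun.mp hjy).2, hyal j hjn⟩
          · rw [if_neg hjT]
            intro hycl
            apply hjT
            rw [← hyT]
            exact mem_Tfun.mpr ⟨hjn, hycl⟩
        · rintro ⟨hyA, hy⟩
          have hyal : y ∈ aliveSet (BB A) n := by
            intro j hjn
            have hj := hy j (Finset.mem_range.mpr hjn)
            by_cases hjT : j ∈ T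
            · rw [if_pos hjT] at hj; exact hj.2
            · rw [if_neg hjT] at hj
              exact fun hyB => hj (subset_closure hyB)
          refine ⟨⟨hyA, hyal⟩, ?_⟩
          ext j
          rw [mem_Tfun]
          constructor
          · rintro ⟨hjn, hycl⟩
            have hj := hy j (Finset.mem_range.mpr hjn)
            by_cases hjT : j ∈ T
            · exact hjT
            · rw [if_neg hjT] at hj; exact absurd hycl hj
          · intro hjT
            have hjn : j < n := Finset.mem_range.mp (hTsub hjT)
            have hj := hy j (Finset.mem_range.mpr hjn)
            rw [if_pos hjT] at hj
            exact ⟨hjn, hj.1⟩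
      rw [heq]
      refine (hlc k).inter (isLocallyClosed_biInter _ _ ?_)
      intro j hj
      by_cases hjT : j ∈ T
      · rw [if_pos hjT]
        exact (isClosed_closure_diff (ih j (Finset.mem_range.mp hj))).isLocallyClosed
      · rw [if_neg hjT]
        exact isClosed_closure.isOpen_compl.isLocallyClosed

lemma BB_dies (A : ℕ → Set X) : ∀ k, ∃ n, A k ∩ aliveSet (BB A) n = ∅ := by
  intro k
  induction k using Nat.strong_induction_on with
  | _ k ih =>
    obtain ⟨N, hN⟩ : ∃ N, ∀ k' < k, A k' ∩ aliveSet (BB A) N = ∅ := by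
      choose f hf using ih
      refine ⟨(Finset.range k).sup (fun k' => if h : k' < k then f k' h else 0), ?_⟩
      intro k' hk'
      have hle : f k' hk' ≤ (Finset.range k).sup
          (fun k' => if h : k' < k then f k' h else 0) := by
        have h1 := Finset.le_sup (f := fun k'' => if h : k'' < k then f k'' h else 0)
            (Finset.mem_range.mpr hk')
        simpa [hk'] using h1
      have h0 := hf k' hk'
      rw [← Set.not_nonempty_iff_eq_empty] at h0 ⊢
      rintro ⟨y, hy1, hy2⟩
      exact h0 ⟨y, hy1, alive_antitone A hle hy2⟩
    by_contra hcon
    push_neg at hcon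
    have hne : ∀ n, (A k ∩ aliveSet (BB A) n).Nonempty := hcon
    have hdead : ∀ n, N ≤ n → ∀ k' < k, A k' ∩ aliveSet (BB A) n = ∅ := by
      intro n hn k' hk'
      have h0 := hN k' hk'
      rw [← Set.not_nonempty_iff_eq_empty] at h0 ⊢
      rintro ⟨y, hy1, hy2⟩
      exact h0 ⟨y, hy1, alive_antitone A hn hy2⟩
    have hdec : ∀ n, N ≤ n →
        (Tfun (BB A) (n+1) '' (A k ∩ aliveSet (BB A) (n+1))).ncard <
        (Tfun (BB A) n '' (A k ∩ aliveSet (BB A) n)).ncard := by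
      intro n hn
      rcases BB_spec A n with ⟨_, hall⟩ | ⟨k', T, hlow, hk'ne, hTmem, hTmax, hBn⟩
      · exact absurd (hall k) (Set.nonempty_iff_ne_empty.mp (hcon n))
      have hk'k : k' = k := by
        rcases lt_trichotomy k' k with hlt | hEq | hgt
        · exact absurd (hdead n hn k' hlt) (Set.nonempty_iff_ne_empty.mp hk'ne)
        · exact hEq
        · exact absurd (hlow k hgt) (Set.nonempty_iff_ne_empty.mp (hcon n))
      subst hk'k
      have hkey : ∀ y, y ∈ A k' ∩ aliveSet (BB A) (n+1) →
          Tfun (BB A) (n+1) y = Tfun (BB A) n y ∧ Tfun (BB A) n y ≠ T := by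
        rintro y ⟨hyA, hyal⟩
        have hyaln : y ∈ aliveSet (BB A) n := alive_antitone A (Nat.le_succ n) hyal
        have hyTn : Tfun (BB A) n y ∈ Tfun (BB A) n '' (A k' ∩ aliveSet (BB A) n) :=
          ⟨y, ⟨hyA, hyaln⟩, rfl⟩
        have hynB : y ∉ BB A n := hyal n (Nat.lt_succ_self n)
        have hyneT : Tfun (BB A) n y ≠ T := by
          intro hEq
          apply hynB
          rw [hBn]
          exact ⟨⟨hyA, hyaln⟩, hEq⟩
        have hyncl : y ∉ closure (BB A n) := by
          intro hycl
          have hTsuby : T ⊆ Tfun (BB A) n y := by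
            intro j hjT
            have hjn : j < n := by
              obtain ⟨z, _, rfl⟩ := hTmem
              exact Finset.mem_range.mp (Tfun_subset_range _ _ _ hjT)
            have hBsub : BB A n ⊆ closure (BB A j) := by
              intro z hz
              rw [hBn] at hz
              have hjz : j ∈ Tfun (BB A) n z := by rw [hz.2]; exact hjT
              exact (mem_Tfun.mp hjz).2
            have hclcl : closure (BB A n) ⊆ closure (BB A j) :=
              closure_minimal hBsub isClosed_closure
            exact mem_Tfun.mpr ⟨hjn, hclcl hycl⟩
          exact hyneT (hTmax _ hyTn hTsuby).symm
        refine ⟨?_, hyneT⟩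
        ext j
        simp only [mem_Tfun]
        constructor
        · rintro ⟨hj, hcl⟩
          rcases Nat.lt_succ_iff_lt_or_eq.mp hj with hj' | rfl
          · exact ⟨hj', hcl⟩
          · exact absurd hcl hyncl
        · rintro ⟨hj, hcl⟩
          exact ⟨hj.trans (Nat.lt_succ_self n), hcl⟩
      have hfin := image_Tfun_finite A n k'
      have hsub : Tfun (BB A) (n+1) '' (A k' ∩ aliveSet (BB A) (n+1)) ⊆
          Tfun (BB A) n '' (A k' ∩ aliveSet (BB A) n) := by
        rintro T' ⟨y, hy, rfl⟩
        rw [(hkey y hy).1]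
        exact ⟨y, ⟨hy.1, alive_antitone A (Nat.le_succ n) hy.2⟩, rfl⟩
      have hTnot : T ∉ Tfun (BB A) (n+1) '' (A k' ∩ aliveSet (BB A) (n+1)) := by
        rintro ⟨y, hy, hEq⟩
        rw [(hkey y hy).1] at hEq
        exact (hkey y hy).2 hEq
      have hss : Tfun (BB A) (n+1) '' (A k' ∩ aliveSet (BB A) (n+1)) ⊂
          Tfun (BB A) n '' (A k' ∩ aliveSet (BB A) n) :=
        ⟨hsub, fun hs => hTnot (hs hTmem)⟩
      exact Set.ncard_lt_ncard hss hfin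
    have harith : ∀ m, (Tfun (BB A) (N+m) '' (A k ∩ aliveSet (BB A) (N+m))).ncard + m ≤
        (Tfun (BB A) N '' (A k ∩ aliveSet (BB A) N)).ncard := by
      intro m
      induction m with
      | zero => simp
      | succ m ihm =>
          have hd := hdec (N+m) (Nat.le_add_right N m)
          have heq : N + (m + 1) = (N + m) + 1 := by omega
          rw [heq]
          omega
    have hfinal := harith ((Tfun (BB A) N '' (A k ∩ aliveSet (BB A) N)).ncard + 1)
    omega

end Stmt9

theorem stmt_9 {X : Type*} [TopologicalSpace X] (A : ℕ → Set X)
    (hlc : ∀ i, IsLocallyClosed (A i))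
    (hdisj : Pairwise (Function.onFun Disjoint A))
    (hcover : (⋃ i, A i) = Set.univ) :
    ∃ B : ℕ → Set X, (∀ i, IsLocallyClosed (B i)) ∧
      Pairwise (Function.onFun Disjoint B) ∧
      (⋃ i, B i) = Set.univ ∧
      (∀ i, ∃ k, B i ⊆ A k) ∧
      (∀ j i : ℕ, j < i → B i ∩ closure (B j) = ∅ ∨ B i ⊆ closure (B j)) := by
  classical
  refine ⟨Stmt9.BB A, Stmt9.BB_lc A hlc, Stmt9.BB_disjoint A, ?_, ?_, Stmt9.BB_frontier A⟩
  · rw [Set.eq_univ_iff_forall]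
    intro x
    have hx : x ∈ ⋃ i, A i := by rw [hcover]; exact Set.mem_univ x
    obtain ⟨k, hk⟩ := Set.mem_iUnion.mp hx
    obtain ⟨n, hn⟩ := Stmt9.BB_dies A k
    rw [Set.mem_iUnion]
    by_contra hcon
    push_neg at hcon
    have hxal : x ∈ Stmt9.aliveSet (Stmt9.BB A) n := fun j _ => hcon j
    rw [Set.eq_empty_iff_forall_notMem] at hn
    exact hn x ⟨hk, hxal⟩
  · intro i
    rcases Stmt9.BB_spec A i with ⟨h, _⟩ | ⟨k, T, _, _, _, _, h⟩
    · exact ⟨0, by rw [h]; exact Set.empty_subset _⟩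
    · exact ⟨k, by rw [h]; exact fun y hy => hy.1.1⟩
end

section
/- If {A_0, A_1} is a two-cell partition of a topological space X into locally closed sets, then either {A_0, A_1} is linearly separated in one of the two orders, or there is a refinement into at most four locally closed cells that is linearly separated. -/
theorem stmt_10 {X : Type*} [TopologicalSpace X] (A₀ A₁ : Set X)
    (h0 : IsLocallyClosed A₀) (h1 : IsLocallyClosed A₁)
    (hdisj : Disjoint A₀ A₁) (hcover : A₀ ∪ A₁ = Set.univ) :
    (A₀ ∩ closure A₁ = ∅ ∨ A₁ ∩ closure A₀ = ∅) ∨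
    ∃ B : Fin 4 → Set X, (∀ i, IsLocallyClosed (B i)) ∧
      Pairwise (Function.onFun Disjoint B) ∧
      (⋃ i, B i) = Set.univ ∧
      (∀ i, B i ⊆ A₀ ∨ B i ⊆ A₁) ∧
      ∃ le : Fin 4 → Fin 4 → Prop, IsLinearOrder (Fin 4) le ∧
        ∀ i, B i ∩ closure (⋃ j ∈ {j | le j i ∧ j ≠ i}, B j) = ∅ := by
  right
  obtain ⟨U, Z, hU, hZ, hA1UZ⟩ := id h1
  have hd := Set.disjoint_left.mp hdisj
  set B : Fin 4 → Set X :=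
    ![A₀ ∩ closure A₁, A₁ ∩ closure A₀, A₀ \ closure A₁, A₁ \ closure A₀] with hB
  refine ⟨B, ?_, ?_, ?_, ?_, (· ≤ ·), inferInstance, ?_⟩
  · intro i
    fin_cases i
    · exact (show IsLocallyClosed (A₀ ∩ closure A₁) from
        h0.inter isClosed_closure.isLocallyClosed)
    · exact (show IsLocallyClosed (A₁ ∩ closure A₀) from
        h1.inter isClosed_closure.isLocallyClosed)
    · exact (show IsLocallyClosed (A₀ ∩ (closure A₁)ᶜ) from
        h0.inter isClosed_closure.isOpen_compl.isLocallyClosed)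
    · exact (show IsLocallyClosed (A₁ ∩ (closure A₀)ᶜ) from
        h1.inter isClosed_closure.isOpen_compl.isLocallyClosed)
  · intro i j hij
    fin_cases i <;> fin_cases j <;>
      first
      | exact absurd rfl hij
      | · refine Set.disjoint_left.mpr fun x hx hy => ?_
          simp only [hB, Matrix.cons_val_zero, Matrix.cons_val_one, Matrix.head_cons,
            Matrix.cons_val_two, Matrix.tail_cons, Matrix.cons_val_three,
            Set.mem_inter_iff, Set.mem_diff] at hx hy
          first
            | exact hd hx.1 hy.1
            | exact hd hy.1 hx.1
            | exact hy.2 hx.2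
            | exact hx.2 hy.2
  · ext x
    simp only [Set.mem_iUnion, Set.mem_univ, iff_true]
    have hx : x ∈ A₀ ∪ A₁ := hcover ▸ Set.mem_univ x
    rcases hx with hx | hx
    · by_cases h : x ∈ closure A₁
      · exact ⟨0, by simp [hB, hx, h]⟩
      · exact ⟨2, by simp [hB, hx, h]⟩
    · by_cases h : x ∈ closure A₀
      · exact ⟨1, by simp [hB, hx, h]⟩
      · exact ⟨3, by simp [hB, hx, h]⟩
  · intro i
    fin_cases i
    · exact Or.inl (show A₀ ∩ closure A₁ ⊆ A₀ from Set.inter_subset_left)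
    · exact Or.inr (show A₁ ∩ closure A₀ ⊆ A₁ from Set.inter_subset_left)
    · exact Or.inl (show A₀ \ closure A₁ ⊆ A₀ from Set.diff_subset)
    · exact Or.inr (show A₁ \ closure A₀ ⊆ A₁ from Set.diff_subset)
  · have key : ∀ (i : Fin 4) (C : Set X), IsClosed C → (∀ j, j < i → B j ⊆ C) →
        B i ∩ C = ∅ → B i ∩ closure (⋃ j ∈ {j | j ≤ i ∧ j ≠ i}, B j) = ∅ := by
      intro i C hC hsub hdis
      have hs1 : (⋃ j ∈ {j | j ≤ i ∧ j ≠ i}, B j) ⊆ C :=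
        Set.iUnion₂_subset fun j hj => hsub j (lt_of_le_of_ne hj.1 hj.2)
      have hs2 : closure (⋃ j ∈ {j | j ≤ i ∧ j ≠ i}, B j) ⊆ C := closure_minimal hs1 hC
      exact Set.eq_empty_of_subset_empty
        (hdis ▸ Set.inter_subset_inter_right _ hs2)
    intro i
    fin_cases i
    · refine key 0 ∅ isClosed_empty (fun j hj => absurd hj (by simp)) ?_
      exact Set.inter_empty _
    · refine key 1 Uᶜ hU.isClosed_compl ?_ ?_
      · intro j hj
        have hj0 : j = 0 := by omega
        subst hj0
        intro x hx
        have hx' : x ∈ A₀ ∩ closure A₁ := hx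
        intro hxU
        have hxZ : x ∈ Z := (closure_minimal (hA1UZ ▸ Set.inter_subset_right) hZ) hx'.2
        exact hd hx'.1 (hA1UZ ▸ ⟨hxU, hxZ⟩)
      · ext x
        simp only [Set.mem_inter_iff, Set.mem_compl_iff, Set.mem_empty_iff_false, iff_false]
        rintro ⟨hx1, hxU⟩
        have hx1' : x ∈ A₁ ∩ closure A₀ := hx1
        exact hxU (hA1UZ ▸ hx1'.1 : x ∈ U ∩ Z).1
    · refine key 2 (closure A₁) isClosed_closure ?_ ?_
      · intro j hj
        fin_cases j
        · exact (show A₀ ∩ closure A₁ ⊆ closure A₁ from Set.inter_subset_right)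
        · exact (show A₁ ∩ closure A₀ ⊆ closure A₁ from
            fun x hx => subset_closure hx.1)
        · exact absurd hj (by decide)
        · exact absurd hj (by decide)
      · ext x
        simp only [Set.mem_inter_iff, Set.mem_empty_iff_false, iff_false]
        rintro ⟨hx1, hx2⟩
        exact (show x ∈ A₀ \ closure A₁ from hx1).2 hx2
    · refine key 3 (closure A₀) isClosed_closure ?_ ?_
      · intro j hj
        fin_cases j
        · exact (show A₀ ∩ closure A₁ ⊆ closure A₀ from
            fun x hx => subset_closure hx.1)
        · exact (show A₁ ∩ closure A₀ ⊆ closure A₀ from Set.inter_subset_right)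
        · exact (show A₀ \ closure A₁ ⊆ closure A₀ from
            fun x hx => subset_closure hx.1)
        · exact absurd hj (by decide)
      · ext x
        simp only [Set.mem_inter_iff, Set.mem_empty_iff_false, iff_false]
        rintro ⟨hx1, hx2⟩
        exact (show x ∈ A₁ \ closure A₀ from hx1).2 hx2
end

section
/- Every countable partition of a topological space into locally closed sets admits a refinement into countably many locally closed cells that is linearly separated: there is a countable partition Π' refining Π, with each cell locally closed, and a linear order ⊴ on Π' such that every cell is disjoint from the closure of the union of all strictly ⊴-smaller cells. -/
open Set

namespace S17

/-! ### The lexicographic order on tree nodes -/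

def enc (σ : List Bool) : List ℕ := (σ.map fun b => cond b 0 2) ++ [1]

@[simp] lemma enc_nil : enc [] = [1] := rfl
@[simp] lemma enc_cons (b : Bool) (σ : List Bool) : enc (b :: σ) = (cond b 0 2) :: enc σ := rfl

abbrev LLt : List ℕ → List ℕ → Prop := List.Lex (· < ·)

lemma lex_cons_iff {a b : ℕ} {l1 l2 : List ℕ} :
    LLt (a :: l1) (b :: l2) ↔ a < b ∨ (a = b ∧ LLt l1 l2) := by
  constructor
  · intro h
    cases h with
    | cons h => exact Or.inr ⟨rfl, h⟩
    | rel h => exact Or.inl h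
  · rintro (h | ⟨rfl, h⟩)
    · exact List.Lex.rel h
    · exact List.Lex.cons h

@[simp] lemma lex_nil_right {l : List ℕ} : ¬ LLt l [] := List.not_lex_nil

lemma L0 (τ : List Bool) : LLt (enc τ) [1] ↔ ∃ υ, τ = true :: υ := by
  cases τ with
  | nil => simp [lex_cons_iff]
  | cons b υ => cases b <;> simp [-List.lex_lt, -List.not_lex_lt, lex_cons_iff]

lemma L1 (σ : List Bool) : ∀ τ, LLt (enc τ) (enc (σ ++ [false])) ↔
    (∃ υ, τ = σ ++ false :: true :: υ) ∨ τ = σ ∨ LLt (enc τ) (enc σ) := by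
  induction σ with
  | nil =>
    intro τ
    cases τ with
    | nil => simp [-List.lex_lt, -List.not_lex_lt, lex_cons_iff]
    | cons b υ =>
      cases b
      · simp [-List.lex_lt, -List.not_lex_lt, lex_cons_iff, L0 υ]
      · simp [-List.lex_lt, -List.not_lex_lt, lex_cons_iff]
  | cons c ρ IH =>
    intro τ
    cases τ with
    | nil => cases c <;> simp [-List.lex_lt, -List.not_lex_lt, lex_cons_iff]
    | cons d υ =>
      cases c <;> cases d <;> simp [-List.lex_lt, -List.not_lex_lt, lex_cons_iff, IH υ]

lemma L2 (σ : List Bool) : ∀ τ, LLt (enc τ) (enc (σ ++ [true])) →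
    (∃ υ, τ = σ ++ true :: true :: υ) ∨ LLt (enc τ) (enc σ) := by
  induction σ with
  | nil =>
    intro τ
    cases τ with
    | nil => simp [-List.lex_lt, -List.not_lex_lt, lex_cons_iff]
    | cons b υ =>
      cases b
      · simp [-List.lex_lt, -List.not_lex_lt, lex_cons_iff, L0 υ]
      · simp [-List.lex_lt, -List.not_lex_lt, lex_cons_iff]
  | cons c ρ IH =>
    intro τ
    cases τ with
    | nil => cases c <;> simp [-List.lex_lt, -List.not_lex_lt, lex_cons_iff]
    | cons d υ =>
      cases c <;> cases d <;> simp [-List.lex_lt, -List.not_lex_lt, lex_cons_iff] <;> intro h <;>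
        rcases IH υ h with (⟨υ', rfl⟩ | h') <;> simp [*]

lemma L3 (σ : List Bool) : ∀ v, ¬ LLt (enc (σ ++ false :: v)) (enc σ) := by
  induction σ with
  | nil => intro v; simp [-List.lex_lt, -List.not_lex_lt, lex_cons_iff]
  | cons c ρ IH => intro v; cases c <;> simp [-List.lex_lt, -List.not_lex_lt, lex_cons_iff, IH v]

/-- The linear order on nodes of the tree ("leaf-first" lists): compare the
paths from the root, putting the closed subtree of a node below the node
itself, which in turn sits below its open subtree. -/
def slt (t s : List Bool) : Prop := LLt (enc t.reverse) (enc s.reverse)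

lemma listSTO : IsStrictTotalOrder (List ℕ) LLt :=
  { isStrictWeakOrder_of_isOrderConnected with }

lemma slt_irrefl (s : List Bool) : ¬ slt s s := listSTO.irrefl _

lemma slt_trans {s t r : List Bool} (h1 : slt s t) (h2 : slt t r) : slt s r :=
  listSTO.trans _ _ _ h1 h2

lemma enc_injective : Function.Injective enc := by
  intro a b h
  have h2 : a.map (fun b => cond b 0 2) = b.map (fun b => cond b 0 2) :=
    List.append_cancel_right h
  have hinj : Function.Injective (fun b : Bool => cond b 0 2) := by
    intro x y hxy
    cases x <;> cases y <;> simp_all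
  exact List.map_injective_iff.2 hinj h2

lemma slt_trichotomy (s t : List Bool) : slt s t ∨ s = t ∨ slt t s := by
  rcases trichotomous_of LLt (enc s.reverse) (enc t.reverse) with h | h | h
  · exact Or.inl h
  · exact Or.inr (Or.inl (List.reverse_injective (enc_injective h)))
  · exact Or.inr (Or.inr h)

lemma slt_nil {t : List Bool} (h : slt t []) : ∃ u, t = u ++ [true] := by
  rcases (L0 t.reverse).1 (by simpa [slt] using h) with ⟨υ, hυ⟩
  refine ⟨υ.reverse, ?_⟩
  have := congrArg List.reverse hυ
  simpa using this

lemma slt_false_cons {t q : List Bool} (h : slt t (false :: q)) :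
    (∃ u, t = u ++ true :: false :: q) ∨ t = q ∨ slt t q := by
  have h' : LLt (enc t.reverse) (enc (q.reverse ++ [false])) := by
    simpa [slt] using h
  rcases (L1 q.reverse t.reverse).1 h' with ⟨υ, hυ⟩ | hq | hlt
  · refine Or.inl ⟨υ.reverse, ?_⟩
    have := congrArg List.reverse hυ
    simpa using this
  · exact Or.inr (Or.inl (List.reverse_injective hq))
  · exact Or.inr (Or.inr hlt)

lemma slt_true_cons {t q : List Bool} (h : slt t (true :: q)) :
    (∃ u, t = u ++ true :: true :: q) ∨ slt t q := by
  have h' : LLt (enc t.reverse) (enc (q.reverse ++ [true])) := by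
    simpa [slt] using h
  rcases L2 q.reverse t.reverse h' with ⟨υ, hυ⟩ | hlt
  · refine Or.inl ⟨υ.reverse, ?_⟩
    have := congrArg List.reverse hυ
    simpa using this
  · exact Or.inr hlt

lemma not_slt_false (u s : List Bool) : ¬ slt (u ++ false :: s) s := by
  have : (u ++ false :: s).reverse = s.reverse ++ false :: u.reverse := by simp
  rw [slt, this]
  exact L3 s.reverse u.reverse

/-! ### The refinement tree -/

variable {X : Type*} [TopologicalSpace X] (A : ℕ → Set X)

/-- Regions of the refinement tree. Lists are "leaf-first": the head is the most
recent branching decision. `true` = closed child, `false` = open child. -/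
def Reg : List Bool → Set X
  | [] => Set.univ
  | (true :: s) => (Reg s ∩ closure (A s.length ∩ Reg s)) \ (A s.length ∩ Reg s)
  | (false :: s) => Reg s \ closure (A s.length ∩ Reg s)

/-- The cell extracted at node `s`. -/
def Cell (s : List Bool) : Set X := A s.length ∩ Reg A s

lemma Reg_true (s : List Bool) :
    Reg A (true :: s) = (Reg A s ∩ closure (Cell A s)) \ Cell A s := rfl

lemma Reg_false (s : List Bool) :
    Reg A (false :: s) = Reg A s \ closure (Cell A s) := rfl

lemma Reg_cons_subset (b : Bool) (s : List Bool) : Reg A (b :: s) ⊆ Reg A s := by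
  cases b
  · rw [Reg_false]; exact diff_subset
  · rw [Reg_true]; exact diff_subset.trans inter_subset_left

lemma Reg_append_subset (u s : List Bool) : Reg A (u ++ s) ⊆ Reg A s := by
  induction u with
  | nil => simp
  | cons b u IH => exact (Reg_cons_subset A b (u ++ s)).trans IH

lemma Cell_subset_Reg (s : List Bool) : Cell A s ⊆ Reg A s := inter_subset_right

lemma Reg_true_subset (s : List Bool) :
    Reg A (true :: s) ⊆ closure (Cell A s) \ Cell A s := by
  rw [Reg_true]
  exact diff_subset_diff_left inter_subset_right

variable (hlc : ∀ i, IsLocallyClosed (A i))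

include hlc

lemma Reg_lc : ∀ s : List Bool, IsLocallyClosed (Reg A s)
  | [] => isOpen_univ.isLocallyClosed
  | (b :: s) => by
    have hR := Reg_lc s
    have hcell : IsLocallyClosed (Cell A s) := (hlc s.length).inter hR
    have hcl : IsClosed (closure (Cell A s) \ Cell A s) := by
      rw [← isOpen_compl_iff]
      exact hcell.isOpen_coborder
    cases b
    · rw [Reg_false, diff_eq]
      exact hR.inter isClosed_closure.isOpen_compl.isLocallyClosed
    · rw [Reg_true]
      have : (Reg A s ∩ closure (Cell A s)) \ Cell A s
          = Reg A s ∩ (closure (Cell A s) \ Cell A s) := by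
        ext x; simp only [mem_diff, mem_inter_iff]; tauto
      rw [this]
      exact hR.inter hcl.isLocallyClosed

lemma Cell_lc (s : List Bool) : IsLocallyClosed (Cell A s) :=
  (hlc s.length).inter (Reg_lc A hlc s)

lemma closure_diff_Cell_closed (s : List Bool) :
    IsClosed (closure (Cell A s) \ Cell A s) := by
  rw [← isOpen_compl_iff]
  exact (Cell_lc A hlc s).isOpen_coborder

omit hlc

/-- A point lies in at most one region of each depth. -/
lemma Reg_unique : ∀ (s t : List Bool), s.length = t.length →
    ∀ x, x ∈ Reg A s → x ∈ Reg A t → s = t := by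
  intro s
  induction s with
  | nil => intro t ht x _ _; cases t with
    | nil => rfl
    | cons => simp at ht
  | cons b s IH =>
    intro t ht x hxs hxt
    cases t with
    | nil => simp at ht
    | cons c t =>
      simp only [List.length_cons, Nat.add_right_cancel_iff] at ht
      have hst : s = t := IH t ht x (Reg_cons_subset A b s hxs) (Reg_cons_subset A c t hxt)
      subst hst
      cases b <;> cases c
      · rfl
      · exact absurd ((Reg_true_subset A s hxt).1) hxs.2
      · exact absurd ((Reg_true_subset A s hxs).1) hxt.2
      · rfl

variable (hdisj : Pairwise (Function.onFun Disjoint A))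

include hdisj

lemma Cell_disjoint {s t : List Bool} (hst : s ≠ t) : Disjoint (Cell A s) (Cell A t) := by
  rw [disjoint_left]
  intro x hxs hxt
  rcases eq_or_ne s.length t.length with hlen | hlen
  · exact hst (Reg_unique A s t hlen x hxs.2 hxt.2)
  · exact (hdisj hlen).le_bot ⟨hxs.1, hxt.1⟩

lemma Cell_cover_aux : ∀ (j : ℕ) (m : ℕ) (s : List Bool) (x : X), x ∈ A m → x ∈ Reg A s →
    m = s.length + j → ∃ t, x ∈ Cell A t := by
  intro j
  induction j with
  | zero =>
    intro m s x hxm hxs hm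
    refine ⟨s, ?_⟩
    have : s.length = m := by omega
    exact ⟨this ▸ hxm, hxs⟩
  | succ j IH =>
    intro m s x hxm hxs hm
    have hne : s.length ≠ m := by omega
    have hxcell : x ∉ Cell A s := fun hc => (hdisj hne).le_bot ⟨hc.1, hxm⟩
    by_cases hcl : x ∈ closure (Cell A s)
    · exact IH m (true :: s) x hxm ⟨⟨hxs, hcl⟩, hxcell⟩ (by simp [hm]; omega)
    · exact IH m (false :: s) x hxm ⟨hxs, hcl⟩ (by simp [hm]; omega)

lemma Cell_cover (hcover : (⋃ i, A i) = Set.univ) (x : X) : ∃ t, x ∈ Cell A t := by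
  have : x ∈ ⋃ i, A i := by rw [hcover]; trivial
  rcases mem_iUnion.1 this with ⟨m, hm⟩
  exact Cell_cover_aux A hdisj m m [] x hm trivial (by simp)

omit hdisj

/-- The closed "history" set collecting the closures of the cells at the
ancestors which the path to `s` left through the open child. -/
def Hist : List Bool → Set X
  | [] => ∅
  | (true :: s) => Hist s
  | (false :: s) => closure (Cell A s) ∪ Hist s

lemma Hist_closed : ∀ s : List Bool, IsClosed (Hist A s)
  | [] => isClosed_empty
  | (true :: s) => Hist_closed s
  | (false :: s) => isClosed_closure.union (Hist_closed s)

lemma Hist_disjoint_Reg : ∀ s : List Bool, Disjoint (Hist A s) (Reg A s)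
  | [] => by simp [Hist]
  | (true :: s) => ((Hist_disjoint_Reg s).mono_right (Reg_cons_subset A true s))
  | (false :: s) => by
    rw [Hist, Reg_false, disjoint_union_left]
    exact ⟨disjoint_sdiff_right, (Hist_disjoint_Reg s).mono_right
      (diff_subset.trans (le_refl _))⟩

/-! ### The main separation lemma -/

lemma main_aux : ∀ (s t : List Bool), slt t s →
    (∃ u, t = u ++ true :: s) ∨ Cell A t ⊆ Hist A s := by
  intro s
  induction s with
  | nil =>
    intro t ht
    rcases slt_nil ht with ⟨u, rfl⟩
    exact Or.inl ⟨u, rfl⟩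
  | cons b q IH =>
    intro t ht
    cases b
    · -- open child
      rcases slt_false_cons ht with ⟨u, rfl⟩ | rfl | hlt
      · exact Or.inl ⟨u, rfl⟩
      · refine Or.inr ?_
        rw [Hist]
        exact subset_closure.trans subset_union_left
      · rcases IH t hlt with ⟨u, rfl⟩ | hsub
        · refine Or.inr ?_
          rw [Hist]
          refine subset_union_left.trans' ?_
          exact ((Cell_subset_Reg A _).trans ((Reg_append_subset A u _).trans
            ((Reg_true_subset A q).trans diff_subset)))
        · exact Or.inr (hsub.trans (by rw [Hist]; exact subset_union_right))
    · -- closed child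
      rcases slt_true_cons ht with ⟨u, rfl⟩ | hlt
      · exact Or.inl ⟨u, rfl⟩
      · rcases IH t hlt with ⟨u, rfl⟩ | hsub
        · rcases List.eq_nil_or_concat u with rfl | ⟨u₀, c, rfl⟩
          · simp only [List.nil_append] at ht
            exact absurd ht (slt_irrefl _)
          · simp only [List.concat_eq_append, List.append_assoc,
              List.singleton_append] at ht ⊢
            cases c
            · exact absurd ht (not_slt_false u₀ (true :: q))
            · exact Or.inl ⟨u₀, rfl⟩
        · exact Or.inr (by rw [Hist]; exact hsub)

include hlc in
lemma main_sep {s : List Bool} :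
    Cell A s ∩ closure (⋃ t ∈ {t | slt t s}, Cell A t) = ∅ := by
  have hFclosed : IsClosed ((closure (Cell A s) \ Cell A s) ∪ Hist A s) :=
    (closure_diff_Cell_closed A hlc s).union (Hist_closed A s)
  have hsub : (⋃ t ∈ {t | slt t s}, Cell A t)
      ⊆ (closure (Cell A s) \ Cell A s) ∪ Hist A s := by
    refine iUnion₂_subset fun t ht => ?_
    rcases main_aux A s t ht with ⟨u, rfl⟩ | hsub
    · refine subset_union_left.trans' ?_
      exact (Cell_subset_Reg A _).trans ((Reg_append_subset A u _).trans
        (Reg_true_subset A s))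
    · exact hsub.trans subset_union_right
  have hclsub : closure (⋃ t ∈ {t | slt t s}, Cell A t)
      ⊆ (closure (Cell A s) \ Cell A s) ∪ Hist A s :=
    hFclosed.closure_subset_iff.2 hsub
  rw [eq_empty_iff_forall_notMem]
  rintro x ⟨hx1, hx2⟩
  rcases hclsub hx2 with h | h
  · exact h.2 hx1
  · exact (Hist_disjoint_Reg A s).le_bot ⟨h, Cell_subset_Reg A s hx1⟩

end S17

theorem stmt_17 {X : Type*} [TopologicalSpace X] (A : ℕ → Set X)
    (hlc : ∀ i, IsLocallyClosed (A i))
    (hdisj : Pairwise (Function.onFun Disjoint A))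
    (hcover : (⋃ i, A i) = Set.univ) :
    ∃ B : ℕ → Set X, (∀ i, IsLocallyClosed (B i)) ∧
      Pairwise (Function.onFun Disjoint B) ∧
      (⋃ i, B i) = Set.univ ∧
      (∀ i, ∃ k, B i ⊆ A k) ∧
      ∃ le : ℕ → ℕ → Prop, IsLinearOrder ℕ le ∧
        ∀ i, B i ∩ closure (⋃ j ∈ {j | le j i ∧ j ≠ i}, B j) = ∅ := by
  classical
  letI : Denumerable (List Bool) := Denumerable.ofEncodableOfInfinite _
  set e : List Bool ≃ ℕ := Denumerable.eqv (List Bool) with he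
  set p : ℕ → List Bool := fun n => e.symm n with hp
  have hpinj : Function.Injective p := e.symm.injective
  have hpsurj : Function.Surjective p := e.symm.surjective
  refine ⟨fun n => S17.Cell A (p n), fun n => S17.Cell_lc A hlc (p n), ?_, ?_, ?_, ?_⟩
  · intro a b hab
    exact S17.Cell_disjoint A hdisj (fun h => hab (hpinj h))
  · rw [eq_univ_iff_forall]
    intro x
    rcases S17.Cell_cover A hdisj hcover x with ⟨t, ht⟩
    rcases hpsurj t with ⟨n, rfl⟩
    exact mem_iUnion.2 ⟨n, ht⟩
  · exact fun n => ⟨(p n).length, Set.inter_subset_left⟩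
  · refine ⟨fun a b => S17.slt (p a) (p b) ∨ a = b, ?_, ?_⟩
    · refine { refl := fun a => Or.inr rfl, trans := ?_, antisymm := ?_, total := ?_ }
      · rintro a b c (hab | rfl) (hbc | rfl)
        · exact Or.inl (S17.slt_trans hab hbc)
        · exact Or.inl hab
        · exact Or.inl hbc
        · exact Or.inr rfl
      · intro a b hab hba
        rcases hab with hab | rfl
        · rcases hba with hba | rfl
          · exact absurd (S17.slt_trans hab hba) (S17.slt_irrefl _)
          · rfl
        · rfl
      · intro a b
        rcases S17.slt_trichotomy (p a) (p b) with h | h | h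
        · exact Or.inl (Or.inl h)
        · exact Or.inl (Or.inr (hpinj h))
        · exact Or.inr (Or.inl h)
    · intro i
      have hsub : (⋃ j ∈ {j | (S17.slt (p j) (p i) ∨ j = i) ∧ j ≠ i}, S17.Cell A (p j))
          ⊆ ⋃ t ∈ {t | S17.slt t (p i)}, S17.Cell A t := by
        refine iUnion₂_subset fun j hj => ?_
        rcases hj with ⟨hlt | rfl, hne⟩
        · exact subset_biUnion_of_mem (u := fun t => S17.Cell A t) hlt
        · exact absurd rfl hne
      have := S17.main_sep A hlc (s := p i)
      rw [eq_empty_iff_forall_notMem] at this ⊢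
      rintro x ⟨hx1, hx2⟩
      exact this x ⟨hx1, closure_mono hsub hx2⟩
end
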